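/- Let M be an abelian group regarded as a trivial Z²-module. Then the second group cohomology H²(Z², M) is isomorphic to M. -/

import Mathlib

namespace H2Z2Aux

variable {M : Type} [AddCommGroup M]

/-- The skew part of a 2-cocycle. -/
def lamF (F : ℤ × ℤ → ℤ × ℤ → M) (g h : ℤ × ℤ) : M := F g h - F h g

theorem lamF_add_left (F : ℤ × ℤ → ℤ × ℤ → M)
    (hF : ∀ g h j : ℤ × ℤ, F h j + F g (h + j) = F (g + h) j + F g h)
    (g h j : ℤ × ℤ) :
    lamF F (g + h) j = lamF F g j + lamF F h j := by
  have h1 := hF g h j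
  have h2 := hF j g h
  have h3 := hF g j h
  unfold lamF
  have e1 : F (g + h) j = F h j + F g (h + j) - F g h := by
    rw [eq_sub_iff_add_eq]; exact h1.symm
  have e2 : F j (g + h) = F (j + g) h + F j g - F g h := by
    rw [eq_sub_iff_add_eq, show F j (g + h) + F g h = F g h + F j (g + h) from add_comm _ _]
    exact h2
  have e3 : F (j + g) h = F j h + F g (j + h) - F g j := by
    rw [show g + j = j + g from by abel] at h3
    rw [eq_sub_iff_add_eq]; exact h3.symm
  rw [e1, e2, e3, show j + h = h + j from by abel]
  abel

/-- The skew part bundled as an additive hom in the first variable. -/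
def lamHomF (F : ℤ × ℤ → ℤ × ℤ → M)
    (hF : ∀ g h j : ℤ × ℤ, F h j + F g (h + j) = F (g + h) j + F g h)
    (j : ℤ × ℤ) : (ℤ × ℤ) →+ M :=
  AddMonoidHom.mk' (fun g => lamF F g j) (fun g h => lamF_add_left F hF g h j)

theorem lamF_eq (F : ℤ × ℤ → ℤ × ℤ → M)
    (hF : ∀ g h j : ℤ × ℤ, F h j + F g (h + j) = F (g + h) j + F g h)
    (g h : ℤ × ℤ) :
    lamF F g h = g.1 • lamF F (1, 0) h + g.2 • lamF F (0, 1) h := by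
  have hg : g = g.1 • ((1, 0) : ℤ × ℤ) + g.2 • ((0, 1) : ℤ × ℤ) := by
    ext <;> simp
  calc lamF F g h = lamHomF F hF h g := rfl
    _ = lamHomF F hF h (g.1 • ((1, 0) : ℤ × ℤ)) + lamHomF F hF h (g.2 • ((0, 1) : ℤ × ℤ)) := by
        rw [← map_add, ← hg]
    _ = g.1 • lamHomF F hF h (1, 0) + g.2 • lamHomF F hF h (0, 1) := by
        rw [map_zsmul, map_zsmul]
    _ = g.1 • lamF F (1, 0) h + g.2 • lamF F (0, 1) h := rfl

theorem lamF_neg (F : ℤ × ℤ → ℤ × ℤ → M) (g h : ℤ × ℤ) :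
    lamF F g h = - lamF F h g := by
  unfold lamF; abel

/-- A 2-cocycle on `ℤ²` whose skew part vanishes on the generators is symmetric. -/
theorem symm_of_skew_zero (F : ℤ × ℤ → ℤ × ℤ → M)
    (hF : ∀ g h j : ℤ × ℤ, F h j + F g (h + j) = F (g + h) j + F g h)
    (h0 : F (1, 0) (0, 1) = F (0, 1) (1, 0)) (g h : ℤ × ℤ) : F g h = F h g := by
  have key := lamF_eq F hF
  have l12 : lamF F (1, 0) (0, 1) = 0 := by unfold lamF; rw [h0]; abel
  have l21 : lamF F (0, 1) (1, 0) = 0 := by unfold lamF; rw [h0]; abel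
  have l11 : lamF F (1, 0) (1, 0) = 0 := by unfold lamF; abel
  have l22 : lamF F (0, 1) (0, 1) = 0 := by unfold lamF; abel
  have lz : lamF F g h = 0 := by
    rw [key g h, lamF_neg F (1, 0) h, key h (1, 0), lamF_neg F (0, 1) h, key h (0, 1),
      l11, l12, l21, l22]
    simp
  unfold lamF at lz
  exact sub_eq_zero.mp lz

theorem F_zero_left (F : ℤ × ℤ → ℤ × ℤ → M)
    (hF : ∀ g h j : ℤ × ℤ, F h j + F g (h + j) = F (g + h) j + F g h)
    (j : ℤ × ℤ) : F 0 j = F 0 0 := by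
  have := hF 0 0 j
  simpa using this

/-- The extension group attached to a symmetric 2-cocycle. -/
structure ExtG (M : Type) where
  m : M
  g : ℤ × ℤ

def extAdd (F : ℤ × ℤ → ℤ × ℤ → M)
    (hF : ∀ g h j : ℤ × ℤ, F h j + F g (h + j) = F (g + h) j + F g h)
    (hsym : ∀ g h : ℤ × ℤ, F g h = F h g) : AddCommGroup (ExtG M) :=
  letI : Zero (ExtG M) := ⟨⟨-F 0 0, 0⟩⟩
  letI : Add (ExtG M) := ⟨fun x y => ⟨x.m + y.m + F x.g y.g, x.g + y.g⟩⟩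
  letI : Neg (ExtG M) := ⟨fun x => ⟨-x.m - F x.g (-x.g) - F 0 0, -x.g⟩⟩
  { add := (· + ·)
    zero := 0
    neg := Neg.neg
    nsmul := nsmulRec
    zsmul := zsmulRec
    add_assoc := fun x y z => by
      have h := hF x.g y.g z.g
      show ExtG.mk (x.m + y.m + F x.g y.g + z.m + F (x.g + y.g) z.g) (x.g + y.g + z.g)
          = ExtG.mk (x.m + (y.m + z.m + F y.g z.g) + F x.g (y.g + z.g)) (x.g + (y.g + z.g))
      simp only [ExtG.mk.injEq]
      refine ⟨?_, by abel⟩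
      calc x.m + y.m + F x.g y.g + z.m + F (x.g + y.g) z.g
          = x.m + y.m + z.m + (F (x.g + y.g) z.g + F x.g y.g) := by abel
        _ = x.m + y.m + z.m + (F y.g z.g + F x.g (y.g + z.g)) := by rw [← h]
        _ = x.m + (y.m + z.m + F y.g z.g) + F x.g (y.g + z.g) := by abel
    zero_add := fun x => by
      show ExtG.mk (-F 0 0 + x.m + F 0 x.g) (0 + x.g) = x
      cases x with
      | mk m g =>
        simp only [ExtG.mk.injEq]
        exact ⟨by rw [F_zero_left F hF g]; abel, by abel⟩
    add_zero := fun x => by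
      show ExtG.mk (x.m + -F 0 0 + F x.g 0) (x.g + 0) = x
      cases x with
      | mk m g =>
        simp only [ExtG.mk.injEq]
        exact ⟨by rw [hsym g 0, F_zero_left F hF g]; abel, by abel⟩
    neg_add_cancel := fun x => by
      show ExtG.mk (-x.m - F x.g (-x.g) - F 0 0 + x.m + F (-x.g) x.g) (-x.g + x.g)
          = ExtG.mk (-F 0 0) 0
      simp only [ExtG.mk.injEq]
      exact ⟨by rw [hsym (-x.g) x.g]; abel, by abel⟩
    add_comm := fun x y => by
      show ExtG.mk (x.m + y.m + F x.g y.g) (x.g + y.g) = ExtG.mk (y.m + x.m + F y.g x.g) (y.g + x.g)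
      simp only [ExtG.mk.injEq]
      exact ⟨by rw [hsym x.g y.g]; abel, by abel⟩ }

/-- A symmetric 2-cocycle on `ℤ²` has a primitive. -/
theorem exists_primitive (F : ℤ × ℤ → ℤ × ℤ → M)
    (hF : ∀ g h j : ℤ × ℤ, F h j + F g (h + j) = F (g + h) j + F g h)
    (hsym : ∀ g h : ℤ × ℤ, F g h = F h g) :
    ∃ y : ℤ × ℤ → M, ∀ g h : ℤ × ℤ, F g h = y (g + h) - y g - y h := by
  letI : AddCommGroup (ExtG M) := extAdd F hF hsym
  have hadd : ∀ x y : ExtG M, x + y = ⟨x.m + y.m + F x.g y.g, x.g + y.g⟩ := fun _ _ => rfl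
  let π : ExtG M →+ ℤ × ℤ := AddMonoidHom.mk' (fun x => x.g) (fun x y => rfl)
  let u : ExtG M := ⟨0, (1, 0)⟩
  let v : ExtG M := ⟨0, (0, 1)⟩
  let s : ℤ × ℤ →+ ExtG M :=
    AddMonoidHom.coprod (zmultiplesHom (ExtG M) u) (zmultiplesHom (ExtG M) v)
  have hπs : ∀ g : ℤ × ℤ, (s g).g = g := by
    intro g
    have : π (s g) = g := by
      show π (g.1 • u + g.2 • v) = g
      rw [map_add, map_zsmul, map_zsmul]
      show g.1 • ((1 : ℤ), (0 : ℤ)) + g.2 • ((0 : ℤ), (1 : ℤ)) = g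
      ext <;> simp
    exact this
  refine ⟨fun g => (s g).m, fun g h => ?_⟩
  have hs : s g + s h = s (g + h) := (map_add s g h).symm
  rw [hadd] at hs
  have h1 : (s g).m + (s h).m + F (s g).g (s h).g = (s (g + h)).m := congrArg ExtG.m hs
  rw [hπs g, hπs h] at h1
  show F g h = (s (g + h)).m - (s g).m - (s h).m
  rw [← h1]; abel

end H2Z2Aux

/-- For any abelian group `M` regarded as a trivial `ℤ²`-module, the second group
cohomology `H²(ℤ², M)` is isomorphic to `M`. -/
theorem h2_of_Z2_trivial_coefficients (M : Type) [AddCommGroup M] :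
    Nonempty ((groupCohomology (Rep.trivial ℤ (Multiplicative (ℤ × ℤ)) M) 2) ≃ₗ[ℤ] M) := by
  classical
  set G := Multiplicative (ℤ × ℤ) with hG
  set A := Rep.trivial ℤ G M with hA
  set e₁ : G := Multiplicative.ofAdd ((1, 0) : ℤ × ℤ) with he₁
  set e₂ : G := Multiplicative.ofAdd ((0, 1) : ℤ × ℤ) with he₂
  -- the evaluation map on cocycles
  let φ₀ : groupCohomology.cocycles₂ A →ₗ[ℤ] M :=
    { toFun := fun f => f (e₁, e₂) - f (e₂, e₁)
      map_add' := fun f g => by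
        show (f (e₁, e₂) + g (e₁, e₂)) - (f (e₂, e₁) + g (e₂, e₁))
            = (f (e₁, e₂) - f (e₂, e₁)) + (g (e₁, e₂) - g (e₂, e₁))
        abel
      map_smul' := fun c f => by
        show c • f (e₁, e₂) - c • f (e₂, e₁) = c • (f (e₁, e₂) - f (e₂, e₁))
        rw [smul_sub] }
  let B : Submodule ℤ (groupCohomology.cocycles₂ A) :=
    LinearMap.range (groupCohomology.shortComplexH2 A).moduleCatToCycles
  have hker : B ≤ LinearMap.ker φ₀ := by
    intro f hf
    obtain ⟨x, hx⟩ := LinearMap.mem_range.1 hf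
    have h1 : A.ρ e₁ (x e₂) - x (e₁ * e₂) + x e₁ = f (e₁, e₂) := by rw [← hx]; rfl
    have h2 : A.ρ e₂ (x e₁) - x (e₂ * e₁) + x e₂ = f (e₂, e₁) := by rw [← hx]; rfl
    rw [Rep.trivial_ρ_apply] at h1 h2
    simp only [LinearMap.mem_ker]
    show f (e₁, e₂) - f (e₂, e₁) = 0
    rw [← h1, ← h2, mul_comm e₁ e₂]
    abel
  let φ : (groupCohomology.cocycles₂ A ⧸ B) →ₗ[ℤ] M :=
    Submodule.liftQ B φ₀ hker
  have hinj : Function.Injective φ := by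
    rw [← LinearMap.ker_eq_bot, LinearMap.ker_eq_bot']
    intro z hz
    induction z using Quotient.inductionOn' with
    | h f =>
      have hz' : φ₀ f = 0 := hz
      have h0 : f (e₁, e₂) - f (e₂, e₁) = 0 := hz'
      set F : ℤ × ℤ → ℤ × ℤ → M := fun a b => f (Multiplicative.ofAdd a, Multiplicative.ofAdd b)
        with hFdef
      have hcoc := (groupCohomology.mem_cocycles₂_iff (f : G × G → A)).1 f.2
      have hF : ∀ g h j : ℤ × ℤ, F h j + F g (h + j) = F (g + h) j + F g h := by
        intro g h j
        have := hcoc (Multiplicative.ofAdd g) (Multiplicative.ofAdd h) (Multiplicative.ofAdd j)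
        rw [Rep.trivial_ρ_apply] at this
        exact this.symm
      have hsym : ∀ g h : ℤ × ℤ, F g h = F h g :=
        H2Z2Aux.symm_of_skew_zero F hF (sub_eq_zero.mp h0)
      obtain ⟨y, hy⟩ := H2Z2Aux.exists_primitive F hF hsym
      show Submodule.Quotient.mk f = 0
      rw [Submodule.Quotient.mk_eq_zero]
      refine LinearMap.mem_range.2
        ⟨fun g => -(y (Multiplicative.toAdd g)), groupCohomology.cocycles₂_ext fun g h => ?_⟩
      show A.ρ g (-(y (Multiplicative.toAdd h))) - -(y (Multiplicative.toAdd (g * h)))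
          + -(y (Multiplicative.toAdd g)) = f (g, h)
      rw [Rep.trivial_ρ_apply]
      have := hy (Multiplicative.toAdd g) (Multiplicative.toAdd h)
      show -(y (Multiplicative.toAdd h)) - -(y (Multiplicative.toAdd (g * h)))
          + -(y (Multiplicative.toAdd g)) = f (g, h)
      have hgh : Multiplicative.toAdd (g * h) = Multiplicative.toAdd g + Multiplicative.toAdd h :=
        rfl
      rw [hgh]
      have hfF : f (g, h) = F (Multiplicative.toAdd g) (Multiplicative.toAdd h) := rfl
      rw [hfF, this]
      abel
  have hsurj : Function.Surjective φ := by
    intro m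
    let β : G × G → M := fun p => ((Multiplicative.toAdd p.1).1 * (Multiplicative.toAdd p.2).2) • m
    have hβ : β ∈ groupCohomology.cocycles₂ A := by
      rw [groupCohomology.mem_cocycles₂_iff]
      intro g h j
      rw [Rep.trivial_ρ_apply]
      show (((Multiplicative.toAdd g).1 + (Multiplicative.toAdd h).1) * (Multiplicative.toAdd j).2) • m
          + ((Multiplicative.toAdd g).1 * (Multiplicative.toAdd h).2) • m
          = ((Multiplicative.toAdd h).1 * (Multiplicative.toAdd j).2) • m
          + ((Multiplicative.toAdd g).1 * ((Multiplicative.toAdd h).2 + (Multiplicative.toAdd j).2)) • m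
      rw [← add_smul, ← add_smul]
      congr 1
      ring
    refine ⟨Submodule.Quotient.mk ⟨β, hβ⟩, ?_⟩
    show φ₀ ⟨β, hβ⟩ = m
    show β (e₁, e₂) - β (e₂, e₁) = m
    show ((1 : ℤ) * 1) • m - ((0 : ℤ) * 0) • m = m
    simp
  have E1 : (groupCohomology A 2) ≃+ (groupCohomology.cocycles₂ A ⧸ B) :=
    { toFun := (groupCohomology.H2Iso A).hom
      invFun := (groupCohomology.H2Iso A).inv
      left_inv := fun x => (groupCohomology.H2Iso A).hom_inv_id_apply x
      right_inv := fun x => (groupCohomology.H2Iso A).inv_hom_id_apply x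
      map_add' := map_add _ }
  have E : (groupCohomology A 2) ≃+ M :=
    E1.trans (LinearEquiv.ofBijective φ ⟨hinj, hsurj⟩).toAddEquiv
  refine ⟨AddEquiv.toLinearEquiv E fun c a => ?_⟩
  have := map_intCast_smul E.toAddMonoidHom ℤ ℤ c a
  simp only [Int.cast_id] at this
  exact this
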